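/- Let F^1, ..., F^N be IFSs with probabilities on a compact metric space (X, d), all with common Lipschitz constant 0 ≤ l < 1, and fix a positive integer V. Let F : Ω → H(X) be the code-tree coding map, extended componentwise to F : Ω^V → H(X)^V. Then for every a ∈ A and every ω ∈ Ω^V, F(η^a(ω)) = f^a(F(ω)). Moreover F(Ω_V) = H_V, where H_V is the set attractor of the IFS {H(X)^V; f^a, a ∈ A}, and F(Ω_{V,1}) = H_{V,1}, where H_{V,1} (resp. Ω_{V,1}) is the set of first components of elements of H_V (resp. Ω_V). -/

import Mathlib

open Metric MeasureTheory Filter Set TopologicalSpace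
def CodeTree (M N : ℕ) := List (Fin M) → Fin N

lemma codetree_exists_disagree {M N : ℕ} {ω κ : CodeTree M N} (h : ω ≠ κ) :
    ∃ n : ℕ, ∃ i : List (Fin M), i.length = n ∧ ω i ≠ κ i := by
  obtain ⟨i, hi⟩ := Function.ne_iff.mp h
  exact ⟨i.length, i, rfl, hi⟩

open scoped Classical in
noncomputable def treeDist {M N : ℕ} (ω κ : CodeTree M N) : ℝ :=
  if h : ω = κ then 0
  else (1 / (M : ℝ)) ^ Nat.find (codetree_exists_disagree h)

section
open scoped Classical

variable {M N : ℕ}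

lemma treeDist_nonneg (a b : CodeTree M N) : 0 ≤ treeDist a b := by
  unfold treeDist
  by_cases h : a = b
  · simp [h]
  · rw [dif_neg h]; positivity

lemma treeDist_comm (ω κ : CodeTree M N) : treeDist ω κ = treeDist κ ω := by
  unfold treeDist
  by_cases h : ω = κ
  · subst h; simp
  · rw [dif_neg h, dif_neg (Ne.symm h)]
    congr 1
    exact le_antisymm
      (Nat.find_mono fun n => fun ⟨i, hl, hne⟩ => ⟨i, hl, hne.symm⟩)
      (Nat.find_mono fun n => fun ⟨i, hl, hne⟩ => ⟨i, hl, hne.symm⟩)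

lemma treeDist_triangle [NeZero M] (x y z : CodeTree M N) :
    treeDist x y ≤ treeDist x z + treeDist z y := by
  have hMpos : (0 : ℕ) < M := Nat.pos_of_ne_zero (NeZero.ne M)
  have hM : (0 : ℝ) < 1 / (M : ℝ) := by positivity
  have hM1 : (1 / (M : ℝ)) ≤ 1 := by
    rw [div_le_one (by exact_mod_cast hMpos)]
    exact_mod_cast hMpos
  by_cases hxy : x = y
  · rw [show treeDist x y = 0 by rw [hxy]; simp [treeDist]]
    exact add_nonneg (treeDist_nonneg _ _) (treeDist_nonneg _ _)
  by_cases hxz : x = z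
  · subst hxz
    rw [show treeDist x x = 0 by simp [treeDist], zero_add]
  by_cases hzy : z = y
  · subst hzy
    rw [show treeDist z z = 0 by simp [treeDist], add_zero]
  -- all distinct
  have key : Nat.find (codetree_exists_disagree hxz) ≤ Nat.find (codetree_exists_disagree hxy)
      ∨ Nat.find (codetree_exists_disagree hzy) ≤ Nat.find (codetree_exists_disagree hxy) := by
    obtain ⟨i, hlen, hne⟩ := Nat.find_spec (codetree_exists_disagree hxy)
    by_cases h : x i = z i
    · right
      exact Nat.find_le ⟨i, hlen, by rw [← h]; exact hne⟩
    · left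
      exact Nat.find_le ⟨i, hlen, h⟩
  rw [treeDist, dif_neg hxy, treeDist, dif_neg hxz, treeDist, dif_neg hzy]
  rcases key with h | h
  · calc (1 / (M:ℝ)) ^ Nat.find (codetree_exists_disagree hxy)
        ≤ (1 / (M:ℝ)) ^ Nat.find (codetree_exists_disagree hxz) :=
          pow_le_pow_of_le_one (le_of_lt hM) hM1 h
      _ ≤ _ := le_add_of_nonneg_right (by positivity)
  · calc (1 / (M:ℝ)) ^ Nat.find (codetree_exists_disagree hxy)
        ≤ (1 / (M:ℝ)) ^ Nat.find (codetree_exists_disagree hzy) :=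
          pow_le_pow_of_le_one (le_of_lt hM) hM1 h
      _ ≤ _ := le_add_of_nonneg_left (by positivity)

lemma treeDist_eq_zero [NeZero M] {x y : CodeTree M N} (h : treeDist x y = 0) : x = y := by
  by_contra hne
  have hMpos : (0 : ℕ) < M := Nat.pos_of_ne_zero (NeZero.ne M)
  have hM : (0 : ℝ) < 1 / (M : ℝ) := by positivity
  rw [treeDist, dif_neg hne] at h
  exact (pow_pos hM _).ne' h

end

noncomputable instance {M N : ℕ} [NeZero M] : MetricSpace (CodeTree M N) where
  dist := treeDist
  dist_self := fun ω => by simp [treeDist]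
  dist_comm := treeDist_comm
  dist_triangle := fun a b c => treeDist_triangle a c b
  eq_of_dist_eq_zero := treeDist_eq_zero

/-- The index set `A = ({1,…,N} × {1,…,V}^M)^V`; `(a v).1` is the IFS number `n_v`
and `(a v).2 m` is the limb label `v_{v,m}`. -/
abbrev IdxA (M N V : ℕ) := Fin V → Fin N × (Fin M → Fin V)

/-- The shift `ξ_n : Ω^M → Ω`: bottom node labelled `n`, attached to the `M` given trees. -/
def xi {M N : ℕ} (n : Fin N) (ω : Fin M → CodeTree M N) : CodeTree M N :=
  fun i => match i with
  | [] => n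
  | m :: j => ω m j

/-- The map `η^a : Ω^V → Ω^V`. -/
def eta {M N V : ℕ} (a : IdxA M N V) (ω : Fin V → CodeTree M N) : Fin V → CodeTree M N :=
  fun v => xi (a v).1 fun m => ω ((a v).2 m)

/-- The composition `f^{σ(∅)}_{i₁} ∘ f^{σ(i₁)}_{i₂} ∘ ⋯ ∘ f^{σ(i₁…i_{k-1})}_{i_k}`
along the branch `i = i₁i₂…i_k` of the construction tree of `σ`. -/
def treeComp {X : Type*} {M N : ℕ} (f : Fin N → Fin M → X → X) :
    List (Fin M) → CodeTree M N → X → X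
  | [], _ => id
  | m :: t, σ => f (σ []) m ∘ treeComp f t (fun j => σ (m :: j))

/-- The product `p^{σ(∅)}_{i₁} ⋯ p^{σ(i₁…i_{k-1})}_{i_k}` of the probabilities
along the branch `i` of the construction tree of `σ`. -/
def treeProb {M N : ℕ} (p : Fin N → Fin M → NNReal) :
    List (Fin M) → CodeTree M N → NNReal
  | [], _ => 1
  | m :: t, σ => p (σ []) m * treeProb p t (fun j => σ (m :: j))

/-- The map `f^a : H(X)^V → H(X)^V` of the superIFS. -/
def applyIFS {X : Type*} [MetricSpace X] {M N V : ℕ} [NeZero M]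
    (f : Fin N → Fin M → X → X) (hf : ∀ n m, Continuous (f n m))
    (a : IdxA M N V) (K : Fin V → NonemptyCompacts X) : Fin V → NonemptyCompacts X :=
  fun v =>
    ⟨⟨⋃ m, f (a v).1 m '' (K ((a v).2 m) : Set X),
      isCompact_iUnion fun m => ((K ((a v).2 m)).isCompact).image (hf _ _)⟩,
      by
        obtain ⟨x, hx⟩ := (K ((a v).2 0)).nonempty
        exact ⟨f (a v).1 0 x, Set.mem_iUnion.mpr ⟨0, Set.mem_image_of_mem _ hx⟩⟩⟩

section AuxProof

open Metric

variable {X : Type*} [MetricSpace X] [CompactSpace X] [Nonempty X]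
variable {M N : ℕ} [NeZero M]

/-- The level-`k` approximation set of the coding map. -/
noncomputable def Aset (f : Fin N → Fin M → X → X) (k : ℕ) (σ : CodeTree M N) : Set X :=
  ⋃ (i : List (Fin M)) (_ : i.length = k), treeComp f i σ '' Set.univ

lemma Aset_succ (f : Fin N → Fin M → X → X) (k : ℕ) (σ : CodeTree M N) :
    Aset f (k + 1) σ = ⋃ m : Fin M, f (σ []) m '' Aset f k (fun j => σ (m :: j)) := by
  ext x
  simp only [Aset, Set.mem_iUnion, Set.mem_image]
  constructor
  · rintro ⟨i, hi, y, hy, rfl⟩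
    match i, hi with
    | m :: t, hi =>
      exact ⟨m, treeComp f t (fun j => σ (m :: j)) y,
        ⟨t, Nat.succ_injective hi, y, hy, rfl⟩, rfl⟩
  · rintro ⟨m, z, ⟨t, ht, y, hy, rfl⟩, rfl⟩
    exact ⟨m :: t, by simp [ht], y, hy, rfl⟩

lemma Aset_nonempty (f : Fin N → Fin M → X → X) (k : ℕ) (σ : CodeTree M N) :
    (Aset f k σ).Nonempty := by
  obtain ⟨x⟩ := ‹Nonempty X›
  exact ⟨treeComp f (List.replicate k 0) σ x, Set.mem_iUnion.2 ⟨List.replicate k 0,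
    Set.mem_iUnion.2 ⟨List.length_replicate, Set.mem_image_of_mem _ (Set.mem_univ x)⟩⟩⟩

lemma Aset_isCompact (f : Fin N → Fin M → X → X) (hf : ∀ n m, Continuous (f n m))
    (k : ℕ) (σ : CodeTree M N) : IsCompact (Aset f k σ) := by
  induction k generalizing σ with
  | zero =>
    have : Aset f 0 σ = Set.univ := by
      apply Set.eq_univ_of_forall
      intro x
      exact Set.mem_iUnion.2 ⟨[], Set.mem_iUnion.2 ⟨rfl, x, Set.mem_univ x, rfl⟩⟩
    rw [this]; exact isCompact_univ
  | succ k ih =>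
    rw [Aset_succ]
    exact isCompact_iUnion fun m => (ih _).image (hf _ _)

lemma hEfin (s t : Set X) (hs : s.Nonempty) (ht : t.Nonempty) :
    EMetric.hausdorffEdist s t ≠ ⊤ :=
  hausdorffEdist_ne_top_of_nonempty_of_bounded hs ht
    Metric.isBounded_of_compactSpace Metric.isBounded_of_compactSpace

lemma union_dir {l : NNReal} (hl : l < 1) {f : Fin N → Fin M → X → X}
    (hf : ∀ n m, LipschitzWith l (f n m)) (n : Fin N)
    (S T : Fin M → Set X) (hT1 : ∀ m, (T m).Nonempty) (hT2 : ∀ m, IsCompact (T m))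
    {r : ℝ} (h : ∀ m, hausdorffDist (S m) (T m) ≤ r) :
    ∀ x ∈ ⋃ m, f n m '' S m, ∃ y ∈ ⋃ m, f n m '' T m, dist x y ≤ r := by
  intro x hx
  obtain ⟨m, y0, hy0, rfl⟩ := by
    simpa only [Set.mem_iUnion, Set.mem_image] using hx
  have hfin := hEfin (S m) (T m) ⟨y0, hy0⟩ (hT1 m)
  have h1 : infDist y0 (T m) ≤ r := (infDist_le_hausdorffDist_of_mem hy0 hfin).trans (h m)
  obtain ⟨z, hz, hzd⟩ := (hT2 m).exists_infDist_eq_dist (hT1 m) y0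
  refine ⟨f n m z, Set.mem_iUnion.2 ⟨m, Set.mem_image_of_mem _ hz⟩, ?_⟩
  have hl1 : (l : ℝ) ≤ 1 := le_of_lt (by exact_mod_cast hl)
  calc dist (f n m y0) (f n m z) ≤ l * dist y0 z := (hf n m).dist_le_mul y0 z
    _ ≤ 1 * r := by
        refine mul_le_mul hl1 (by rw [← hzd]; exact h1) dist_nonneg zero_le_one
    _ = r := one_mul r

/-- The level-`k` approximation as a nonempty compact set. -/
noncomputable def AkC (f : Fin N → Fin M → X → X) (hf : ∀ n m, Continuous (f n m))
    (k : ℕ) (σ : CodeTree M N) : NonemptyCompacts X :=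
  ⟨⟨Aset f k σ, Aset_isCompact f hf k σ⟩, Aset_nonempty f k σ⟩

lemma tendsto_AkC (f : Fin N → Fin M → X → X) (hf : ∀ n m, Continuous (f n m))
    (Fc : CodeTree M N → NonemptyCompacts X)
    (hFc : ∀ (σ : CodeTree M N) (K : Set X), K.Nonempty → IsCompact K →
      Tendsto (fun k => hausdorffDist
          (⋃ (i : List (Fin M)) (_ : i.length = k), treeComp f i σ '' K) (Fc σ : Set X))
        atTop (nhds 0)) (σ : CodeTree M N) :
    Tendsto (fun k => AkC f hf k σ) atTop (nhds (Fc σ)) := by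
  rw [tendsto_iff_dist_tendsto_zero]
  exact hFc σ Set.univ Set.univ_nonempty isCompact_univ

/-- The key conjugacy identity: `F(ξ_n(τ)) = ⋃ₘ fⁿₘ(F(τₘ))`. -/
lemma Fc_xi {l : NNReal} (hl : l < 1) (f : Fin N → Fin M → X → X)
    (hf : ∀ n m, LipschitzWith l (f n m))
    (Fc : CodeTree M N → NonemptyCompacts X)
    (hFc : ∀ (σ : CodeTree M N) (K : Set X), K.Nonempty → IsCompact K →
      Tendsto (fun k => hausdorffDist
          (⋃ (i : List (Fin M)) (_ : i.length = k), treeComp f i σ '' K) (Fc σ : Set X))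
        atTop (nhds 0))
    (n : Fin N) (τ : Fin M → CodeTree M N) :
    (Fc (xi n τ) : Set X) = ⋃ m, f n m '' (Fc (τ m) : Set X) := by
  have hf' : ∀ n m, Continuous (f n m) := fun n m => (hf n m).continuous
  set U : NonemptyCompacts X := ⟨⟨⋃ m, f n m '' (Fc (τ m) : Set X),
    isCompact_iUnion fun m => (Fc (τ m)).isCompact.image (hf' n m)⟩, by
      obtain ⟨x, hx⟩ := (Fc (τ 0)).nonempty
      exact ⟨f n 0 x, Set.mem_iUnion.2 ⟨0, Set.mem_image_of_mem _ hx⟩⟩⟩ with hU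
  suffices h : Fc (xi n τ) = U by rw [h]; rfl
  have h1 : Tendsto (fun k => AkC f hf' (k + 1) (xi n τ)) atTop (nhds (Fc (xi n τ))) :=
    (tendsto_AkC f hf' Fc hFc (xi n τ)).comp (tendsto_add_atTop_nat 1)
  have h2 : Tendsto (fun k => AkC f hf' (k + 1) (xi n τ)) atTop (nhds U) := by
    rw [tendsto_iff_dist_tendsto_zero]
    have hbd : ∀ k, dist (AkC f hf' (k + 1) (xi n τ)) U ≤
        ∑ m : Fin M, hausdorffDist (Aset f k (τ m)) ((Fc (τ m) : Set X)) := by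
      intro k
      rw [NonemptyCompacts.dist_eq]
      have hA : (AkC f hf' (k + 1) (xi n τ) : Set X) = ⋃ m, f n m '' Aset f k (τ m) := by
        show Aset f (k + 1) (xi n τ) = _
        rw [Aset_succ]
        rfl
      rw [hA]
      set r := ∑ m : Fin M, hausdorffDist (Aset f k (τ m)) ((Fc (τ m) : Set X)) with hr'
      have hr : 0 ≤ r := Finset.sum_nonneg fun m _ => hausdorffDist_nonneg
      have hm : ∀ m, hausdorffDist (Aset f k (τ m)) ((Fc (τ m)) : Set X) ≤ r :=
        fun m => Finset.single_le_sum
          (f := fun i : Fin M => hausdorffDist (Aset f k (τ i)) ((Fc (τ i) : Set X)))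
          (fun m _ => hausdorffDist_nonneg) (Finset.mem_univ m)
      exact hausdorffDist_le_of_mem_dist hr
        (union_dir hl hf n _ _ (fun m => (Fc (τ m)).nonempty)
          (fun m => (Fc (τ m)).isCompact) hm)
        (union_dir hl hf n _ _ (fun m => Aset_nonempty f k (τ m))
          (fun m => Aset_isCompact f hf' k (τ m))
          (fun m => by rw [hausdorffDist_comm]; exact hm m))
    refine squeeze_zero (fun k => dist_nonneg) hbd ?_
    have hterm : ∀ m : Fin M,
        Tendsto (fun k => hausdorffDist (Aset f k (τ m)) ((Fc (τ m)) : Set X)) atTop (nhds 0) :=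
      fun m => hFc (τ m) Set.univ Set.univ_nonempty isCompact_univ
    simpa using tendsto_finset_sum Finset.univ (fun m _ => hterm m)
  exact tendsto_nhds_unique h1 h2

lemma treeComp_append (f : Fin N → Fin M → X → X) (i t : List (Fin M)) (σ : CodeTree M N) :
    treeComp f (i ++ t) σ = treeComp f i σ ∘ treeComp f t (fun j => σ (i ++ j)) := by
  induction i generalizing σ with
  | nil => rfl
  | cons m i ih =>
    show treeComp f (m :: (i ++ t)) σ = _
    simp only [treeComp]
    exact congrArg (f (σ []) m ∘ ·) (ih _)

lemma treeComp_lipschitz {l : NNReal} (f : Fin N → Fin M → X → X)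
    (hf : ∀ n m, LipschitzWith l (f n m)) (i : List (Fin M)) (σ : CodeTree M N) :
    LipschitzWith (l ^ i.length) (treeComp f i σ) := by
  induction i generalizing σ with
  | nil => simpa [treeComp] using LipschitzWith.id
  | cons m t ih =>
    have h := (hf (σ []) m).comp (ih (fun j => σ (m :: j)))
    have : l * l ^ t.length = l ^ (m :: t).length := by
      rw [List.length_cons, pow_succ, mul_comm]
    rw [this] at h
    exact h

lemma Aset_anti (f : Fin N → Fin M → X → X) {k j : ℕ} (h : k ≤ j) (σ : CodeTree M N) :
    Aset f j σ ⊆ Aset f k σ := by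
  intro x hx
  simp only [Aset, Set.mem_iUnion, Set.mem_image] at hx ⊢
  obtain ⟨i, hi, y, -, rfl⟩ := hx
  refine ⟨i.take k, by rw [List.length_take, hi, Nat.min_eq_left h],
    treeComp f (i.drop k) (fun j' => σ (i.take k ++ j')) y, Set.mem_univ _, ?_⟩
  conv_rhs => rw [← List.take_append_drop k i]
  rw [treeComp_append]
  rfl

lemma hausdorffDist_Aset {l : NNReal} (f : Fin N → Fin M → X → X)
    (hf : ∀ n m, LipschitzWith l (f n m)) {k j : ℕ} (h : k ≤ j) (σ : CodeTree M N) :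
    hausdorffDist (Aset f k σ) (Aset f j σ) ≤ (l : ℝ) ^ k * diam (Set.univ : Set X) := by
  have hr : 0 ≤ (l : ℝ) ^ k * diam (Set.univ : Set X) :=
    mul_nonneg (pow_nonneg l.coe_nonneg k) diam_nonneg
  refine hausdorffDist_le_of_mem_dist hr ?_ ?_
  · intro x hx
    simp only [Aset, Set.mem_iUnion, Set.mem_image] at hx
    obtain ⟨i, hi, y, -, rfl⟩ := hx
    set t := List.replicate (j - k) (0 : Fin M) with ht
    set w := treeComp f t (fun j' => σ (i ++ j')) y with hw
    refine ⟨treeComp f i σ w, ?_, ?_⟩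
    · simp only [Aset, Set.mem_iUnion, Set.mem_image]
      refine ⟨i ++ t, by simp [ht, hi]; omega, y, Set.mem_univ y, ?_⟩
      rw [treeComp_append]
      rfl
    · calc dist (treeComp f i σ y) (treeComp f i σ w)
          ≤ (l : ℝ) ^ i.length * dist y w := by
            simpa using (treeComp_lipschitz f hf i σ).dist_le_mul y w
        _ ≤ (l : ℝ) ^ k * diam (Set.univ : Set X) := by
            rw [hi]
            exact mul_le_mul_of_nonneg_left
              (dist_le_diam_of_mem Metric.isBounded_of_compactSpace
                (Set.mem_univ _) (Set.mem_univ _))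
              (pow_nonneg l.coe_nonneg k)
  · intro x hx
    exact ⟨x, Aset_anti f h σ hx, by simpa using hr⟩

lemma hausdorffDist_Aset_Fc {l : NNReal} (f : Fin N → Fin M → X → X)
    (hf : ∀ n m, LipschitzWith l (f n m))
    (Fc : CodeTree M N → NonemptyCompacts X)
    (hFc : ∀ (σ : CodeTree M N) (K : Set X), K.Nonempty → IsCompact K →
      Tendsto (fun k => hausdorffDist
          (⋃ (i : List (Fin M)) (_ : i.length = k), treeComp f i σ '' K) (Fc σ : Set X))
        atTop (nhds 0))
    (k : ℕ) (σ : CodeTree M N) :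
    hausdorffDist (Aset f k σ) ((Fc σ : Set X)) ≤ (l : ℝ) ^ k * diam (Set.univ : Set X) := by
  have hlim : Tendsto (fun j => (l : ℝ) ^ k * diam (Set.univ : Set X) +
      hausdorffDist (Aset f j σ) (Fc σ : Set X)) atTop
      (nhds ((l : ℝ) ^ k * diam (Set.univ : Set X))) := by
    have h0 := hFc σ Set.univ Set.univ_nonempty isCompact_univ
    have h1 : Tendsto (fun j => (l : ℝ) ^ k * diam (Set.univ : Set X) +
        hausdorffDist (Aset f j σ) (Fc σ : Set X)) atTop
        (nhds ((l : ℝ) ^ k * diam (Set.univ : Set X) + 0)) := tendsto_const_nhds.add h0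
    rwa [add_zero] at h1
  refine ge_of_tendsto hlim ?_
  filter_upwards [eventually_ge_atTop k] with j hj
  calc hausdorffDist (Aset f k σ) (Fc σ : Set X)
      ≤ hausdorffDist (Aset f k σ) (Aset f j σ) + hausdorffDist (Aset f j σ) (Fc σ : Set X) :=
        hausdorffDist_triangle (hEfin _ _ (Aset_nonempty f k σ) (Aset_nonempty f j σ))
    _ ≤ _ := add_le_add (hausdorffDist_Aset f hf hj σ) le_rfl

lemma treeComp_congr (f : Fin N → Fin M → X → X) :
    ∀ (i : List (Fin M)) (σ κ : CodeTree M N),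
      (∀ j : List (Fin M), j.length < i.length → σ j = κ j) →
      treeComp f i σ = treeComp f i κ
  | [], _, _, _ => rfl
  | m :: t, σ, κ, h => by
    show f (σ []) m ∘ treeComp f t (fun j => σ (m :: j)) =
      f (κ []) m ∘ treeComp f t (fun j => κ (m :: j))
    rw [h [] (by simp), treeComp_congr f t _ _
      (fun j hj => h (m :: j) (by simpa using Nat.succ_lt_succ hj))]

lemma Aset_congr (f : Fin N → Fin M → X → X) {k : ℕ} {σ κ : CodeTree M N}
    (h : ∀ i : List (Fin M), i.length < k → σ i = κ i) :
    Aset f k σ = Aset f k κ := by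
  unfold Aset
  refine Set.iUnion_congr fun i => Set.iUnion_congr fun hi => ?_
  rw [treeComp_congr f i σ κ (fun j hj => h j (hi ▸ hj))]

lemma Fc_continuous {l : NNReal} (hl : l < 1) (f : Fin N → Fin M → X → X)
    (hf : ∀ n m, LipschitzWith l (f n m))
    (Fc : CodeTree M N → NonemptyCompacts X)
    (hFc : ∀ (σ : CodeTree M N) (K : Set X), K.Nonempty → IsCompact K →
      Tendsto (fun k => hausdorffDist
          (⋃ (i : List (Fin M)) (_ : i.length = k), treeComp f i σ '' K) (Fc σ : Set X))
        atTop (nhds 0)) :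
    Continuous Fc := by
  rw [Metric.continuous_iff]
  intro σ ε hε
  set D := diam (Set.univ : Set X) with hD'
  have hto : Tendsto (fun k : ℕ => 2 * ((l : ℝ) ^ k * D)) atTop (nhds 0) := by
    have h1 : Tendsto (fun k : ℕ => (l : ℝ) ^ k) atTop (nhds 0) :=
      tendsto_pow_atTop_nhds_zero_of_lt_one l.coe_nonneg (by exact_mod_cast hl)
    simpa using (h1.mul_const D).const_mul 2
  obtain ⟨k, hk⟩ := (hto.eventually (gt_mem_nhds hε)).exists
  have hMpos : (0 : ℝ) < 1 / (M : ℝ) := by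
    have : (0 : ℕ) < M := Nat.pos_of_ne_zero (NeZero.ne M)
    positivity
  refine ⟨(1 / (M : ℝ)) ^ k, pow_pos hMpos k, fun κ hκ => ?_⟩
  by_cases hEq : κ = σ
  · simpa [hEq] using hε
  have hagree : ∀ i : List (Fin M), i.length < k → κ i = σ i := by
    classical
    have hd : dist κ σ = (1 / (M : ℝ)) ^ (Nat.find (codetree_exists_disagree hEq)) := by
      show treeDist κ σ = _
      rw [treeDist, dif_neg hEq]
    rw [hd] at hκ
    have hM1 : (1 / (M : ℝ)) ≤ 1 := by
      rw [div_le_one (by exact_mod_cast Nat.pos_of_ne_zero (NeZero.ne M))]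
      exact_mod_cast Nat.one_le_iff_ne_zero.mpr (NeZero.ne M)
    have hfind : k < Nat.find (codetree_exists_disagree hEq) := by
      by_contra hc
      push_neg at hc
      exact absurd hκ (not_lt.2 (pow_le_pow_of_le_one (le_of_lt hMpos) hM1 hc))
    intro i hi
    by_contra hne
    have hle : Nat.find (codetree_exists_disagree hEq) ≤ i.length :=
      Nat.find_le ⟨i, rfl, hne⟩
    omega
  have hAk : Aset f k κ = Aset f k σ := Aset_congr f hagree
  have h1 : hausdorffDist ((Fc κ : Set X)) (Aset f k κ) ≤ (l : ℝ) ^ k * D := by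
    rw [hausdorffDist_comm]
    exact hausdorffDist_Aset_Fc f hf Fc hFc k κ
  have h2 := hausdorffDist_Aset_Fc f hf Fc hFc k σ
  calc dist (Fc κ) (Fc σ) = hausdorffDist ((Fc κ : Set X)) ((Fc σ : Set X)) :=
        NonemptyCompacts.dist_eq
    _ ≤ hausdorffDist ((Fc κ : Set X)) (Aset f k κ) +
        hausdorffDist (Aset f k κ) ((Fc σ : Set X)) :=
        hausdorffDist_triangle (hEfin _ _ (Fc κ).nonempty (Aset_nonempty f k κ))
    _ ≤ (l : ℝ) ^ k * D + (l : ℝ) ^ k * D := add_le_add h1 (by rw [hAk]; exact h2)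
    _ = 2 * ((l : ℝ) ^ k * D) := by ring
    _ < ε := hk

end AuxProof

/-- **Conjugacy of the tree IFS and the superIFS.** Let `F : Ω → H(X)` be the coding map
of the superIFS, extended componentwise to `Ω^V → H(X)^V`.  Then `F ∘ η^a = f^a ∘ F` for
every `a ∈ A`; consequently `F(Ω_V) = H_V` and `F(Ω_{V,1}) = H_{V,1}`, where `Ω_V` and
`H_V` are the set attractors of `{Ω^V; η^a}` and `{H(X)^V; f^a}` and `Ω_{V,1}`, `H_{V,1}`
are their sets of first components. -/
theorem stmt_16 {X : Type*} [MetricSpace X] [CompactSpace X] [Nonempty X]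
    {M N V : ℕ} [NeZero M] [NeZero V] (hN : 0 < N)
    (f : Fin N → Fin M → X → X) (l : NNReal) (hl : l < 1)
    (hf : ∀ n m, LipschitzWith l (f n m))
    (Fc : CodeTree M N → NonemptyCompacts X)
    (hFc : ∀ (σ : CodeTree M N) (K : Set X), K.Nonempty → IsCompact K →
      Tendsto (fun k => hausdorffDist
          (⋃ (i : List (Fin M)) (_ : i.length = k), treeComp f i σ '' K) (Fc σ : Set X))
        atTop (nhds 0))
    (ΩV : Set (Fin V → CodeTree M N))
    (hΩne : ΩV.Nonempty) (hΩcomp : IsCompact ΩV)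
    (hΩinv : ΩV = ⋃ a : IdxA M N V, eta a '' ΩV)
    (hΩuniq : ∀ S : Set (Fin V → CodeTree M N), S.Nonempty → IsCompact S →
      S = ⋃ a : IdxA M N V, eta a '' S → S = ΩV)
    (HV : Set (Fin V → NonemptyCompacts X))
    (hHne : HV.Nonempty) (hHcomp : IsCompact HV)
    (hHinv : HV = ⋃ a : IdxA M N V,
      applyIFS f (fun n m => (hf n m).continuous) a '' HV)
    (hHuniq : ∀ S : Set (Fin V → NonemptyCompacts X), S.Nonempty → IsCompact S →
      S = ⋃ a : IdxA M N V, applyIFS f (fun n m => (hf n m).continuous) a '' S → S = HV) :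
    (∀ (a : IdxA M N V) (ω : Fin V → CodeTree M N),
      (fun v => Fc (eta a ω v)) =
        applyIFS f (fun n m => (hf n m).continuous) a (fun v => Fc (ω v))) ∧
    ((fun (ω : Fin V → CodeTree M N) (v : Fin V) => Fc (ω v)) '' ΩV = HV) ∧
    (Fc '' {σ : CodeTree M N | ∃ ω ∈ ΩV, ω 0 = σ} =
      {K : NonemptyCompacts X | ∃ ω ∈ HV, ω 0 = K}) := by
  have hpart1 : ∀ (a : IdxA M N V) (ω : Fin V → CodeTree M N),
      (fun v => Fc (eta a ω v)) =
        applyIFS f (fun n m => (hf n m).continuous) a (fun v => Fc (ω v)) := by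
    intro a ω
    funext v
    apply NonemptyCompacts.ext
    show (Fc (eta a ω v) : Set X) = ⋃ m, f (a v).1 m '' (Fc (ω ((a v).2 m)) : Set X)
    have hev : eta a ω v = xi (a v).1 (fun m => ω ((a v).2 m)) := rfl
    rw [hev, Fc_xi hl f hf Fc hFc (a v).1 (fun m => ω ((a v).2 m))]
  have hcont : Continuous Fc := Fc_continuous hl f hf Fc hFc
  have hpart2 : (fun (ω : Fin V → CodeTree M N) (v : Fin V) => Fc (ω v)) '' ΩV = HV := by
    refine hHuniq _ (hΩne.image _)
      (hΩcomp.image (continuous_pi fun v => hcont.comp (continuous_apply v))) ?_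
    conv_lhs => rw [hΩinv]
    rw [Set.image_iUnion]
    refine Set.iUnion_congr fun a => ?_
    rw [← Set.image_comp, ← Set.image_comp]
    refine Set.image_congr fun ω _ => ?_
    show (fun v => Fc (eta a ω v)) =
      applyIFS f (fun n m => (hf n m).continuous) a (fun v => Fc (ω v))
    exact hpart1 a ω
  refine ⟨hpart1, hpart2, ?_⟩
  ext K
  constructor
  · rintro ⟨σ, ⟨ω, hω, rfl⟩, rfl⟩
    exact ⟨fun v => Fc (ω v), hpart2 ▸ Set.mem_image_of_mem _ hω, rfl⟩
  · rintro ⟨κ, hκ, rfl⟩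
    rw [← hpart2] at hκ
    obtain ⟨ω, hω, rfl⟩ := hκ
    exact ⟨ω 0, ⟨ω, hω, rfl⟩, rfl⟩
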